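/- If the energy–momentum endomorphism Q is positive semidefinite (i.e. ⟨λ, Qλ⟩ ≥ 0 for every λ ∈ ℂ⁴), then E₀·(E₀² − L²) + 2·V³ ≥ 0. -/

import Mathlib

open Matrix Complex ComplexOrder

/-- The energy–momentum endomorphism `Q` of an asymptotically anti-de Sitter
initial data set, as a 4×4 complex matrix. -/
noncomputable def QMatrix (E₀ c₁ c₂ c₃ c₁' c₂' c₃' J₁ J₂ J₃ : ℝ) :
    Matrix (Fin 4) (Fin 4) ℂ :=
  let w₁ : ℂ := (c₃' : ℂ) - I * J₃
  let w₂p : ℂ := -(c₁' : ℂ) + (J₂ : ℂ) + I * ((c₂' : ℂ) + J₁)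
  let w₂m : ℂ := -(c₁' : ℂ) - (J₂ : ℂ) - I * ((c₂' : ℂ) - J₁)
  !![(E₀ : ℂ) - c₃, (c₁ : ℂ) - I * c₂, w₁, w₂p;
     (c₁ : ℂ) + I * c₂, (E₀ : ℂ) + c₃, w₂m, -w₁;
     starRingEnd ℂ w₁, starRingEnd ℂ w₂m, (E₀ : ℂ) + c₃, -(c₁ : ℂ) + I * c₂;
     starRingEnd ℂ w₂p, -(starRingEnd ℂ w₁), -(c₁ : ℂ) - I * c₂, (E₀ : ℂ) - c₃]

private lemma det_psd_real_nonneg' {n : Type*} [Fintype n] [DecidableEq n]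
    {A : Matrix n n ℂ} (hA : A.PosSemidef) :
    ∃ r : ℝ, 0 ≤ r ∧ A.det = (r : ℂ) := by
  refine ⟨∏ i, hA.1.eigenvalues i,
    Finset.prod_nonneg fun i _ => hA.eigenvalues_nonneg i, ?_⟩
  rw [hA.1.det_eq_prod_eigenvalues]
  push_cast
  rfl

/-- If the energy–momentum endomorphism `Q` is positive semidefinite, then
`E₀·(E₀² − L²) + 2·V³ ≥ 0`. -/
theorem third_minor_nonneg_of_posSemidef
    (E₀ c₁ c₂ c₃ c₁' c₂' c₃' J₁ J₂ J₃ L V : ℝ)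
    (hL0 : 0 ≤ L)
    (hL : L ^ 2 = ![c₁, c₂, c₃] ⬝ᵥ ![c₁, c₂, c₃]
      + ![c₁', c₂', c₃'] ⬝ᵥ ![c₁', c₂', c₃'] + ![J₁, J₂, J₃] ⬝ᵥ ![J₁, J₂, J₃])
    (hV : V ^ 3 = ![c₁, c₂, c₃] ⬝ᵥ (![c₁', c₂', c₃'] ⨯₃ ![J₁, J₂, J₃]))
    (hQ : (QMatrix E₀ c₁ c₂ c₃ c₁' c₂' c₃' J₁ J₂ J₃).PosSemidef) :
    E₀ * (E₀ ^ 2 - L ^ 2) + 2 * V ^ 3 ≥ 0 := by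
  obtain ⟨r₁, hr₁, hd₁⟩ := det_psd_real_nonneg' (hQ.submatrix (![0,1,2] : Fin 3 → Fin 4))
  obtain ⟨r₂, hr₂, hd₂⟩ := det_psd_real_nonneg' (hQ.submatrix (![0,1,3] : Fin 3 → Fin 4))
  simp only [dotProduct, Fin.sum_univ_three, crossProduct, Matrix.cons_val_zero,
    Matrix.cons_val_one, Matrix.head_cons, Matrix.cons_val_two, Matrix.tail_cons,
    LinearMap.mk₂'ₛₗ_apply, LinearMap.mk₂_apply, Matrix.cons_dotProduct] at hL hV
  have key : ((r₁ + r₂ : ℝ) : ℂ)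
      = ((2 * (E₀ * (E₀^2 - (c₁*c₁+c₂*c₂+c₃*c₃+(c₁'*c₁'+c₂'*c₂'+c₃'*c₃')+(J₁*J₁+J₂*J₂+J₃*J₃)))
        + 2 * (c₁*(c₂'*J₃-c₃'*J₂)+c₂*(c₃'*J₁-c₁'*J₃)+c₃*(c₁'*J₂-c₂'*J₁))) : ℝ) : ℂ) := by
    push_cast [← hd₁, ← hd₂]
    simp only [QMatrix, det_fin_three, submatrix_apply, Matrix.of_apply, Matrix.cons_val]
    norm_num [Matrix.cons_val_zero, Matrix.cons_val_one, Matrix.head_cons, Matrix.cons_val',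
      Matrix.cons_val_fin_one, Matrix.empty_val', Matrix.head_fin_const, Complex.ext_iff]
    simp only [← Complex.ofReal_pow, Complex.ofReal_re, Complex.ofReal_im]
    constructor <;> ring
  have key' := Complex.ofReal_injective key
  rw [hL, hV]
  nlinarith [hr₁, hr₂, key']
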